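/- Let 𝒢 = {G_1, …, G_g} be a partition of {1,…,n}, let α > 0 and let s be a positive integer. Let v ∈ ℝⁿ satisfy ‖v_{G_j}‖₁ ≤ α for all j, ‖v‖₁ ≤ sα, and suppose the number r of groups G_j with v_{G_j} ≠ 0 satisfies r ≥ s + 1. Then there exist an integer M ≥ 1, vectors w_1, …, w_M ∈ ℝⁿ, and positive reals λ_1, …, λ_M summing to 1, such that for each t: supp(w_t) ⊆ supp(v); ‖w_t‖₁ = ‖v‖₁; ‖(w_t)_{G_j}‖₁ ≤ α for all j; the number of groups on which w_t is nonzero is at most r − 1; and v = Σ_{t=1}^M λ_t w_t. -/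

import Mathlib

open Finset

noncomputable section

namespace CS

/-- The ℓ1 norm of a vector. -/
def l1 {d : ℕ} (x : Fin d → ℝ) : ℝ := ∑ i, |x i|

/-- The ℓ2 (Euclidean) norm of a vector. -/
def l2 {d : ℕ} (x : Fin d → ℝ) : ℝ := Real.sqrt (∑ i, (x i) ^ 2)

/-- The ℓp norm of a vector (for real p ≥ 1). -/
def lpnorm {d : ℕ} (p : ℝ) (x : Fin d → ℝ) : ℝ := (∑ i, |x i| ^ p) ^ (1 / p)

/-- `restrict Λ x` agrees with `x` on `Λ` and is zero elsewhere. -/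
def restrict {d : ℕ} (Λ : Finset (Fin d)) (x : Fin d → ℝ) : Fin d → ℝ :=
  fun i => if i ∈ Λ then x i else 0

/-- The support of a vector. -/
def supp {d : ℕ} (x : Fin d → ℝ) : Finset (Fin d) :=
  Finset.univ.filter fun i => x i ≠ 0

/-- `G : Fin g → Finset (Fin n)` is a partition of `{1,…,n}` into `g` (nonempty,
pairwise disjoint) groups covering everything. -/
def IsPartition {n g : ℕ} (G : Fin g → Finset (Fin n)) : Prop :=
  (∀ j, (G j).Nonempty) ∧
  (∀ j j', j ≠ j' → Disjoint (G j) (G j')) ∧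
  Finset.univ.biUnion G = Finset.univ

/-- A subset `Λ ⊆ {1,…,n}` is group `k`-sparse: it is a union of groups and has
cardinality at most `k`. -/
def GroupSparseSet {n g : ℕ} (G : Fin g → Finset (Fin n)) (k : ℕ)
    (Λ : Finset (Fin n)) : Prop :=
  (∃ S : Finset (Fin g), Λ = S.biUnion G) ∧ Λ.card ≤ k

/-- A vector is group `l`-sparse: its support is contained in a union of groups
of total cardinality at most `l`. -/
def GroupSparseVec {n g : ℕ} (G : Fin g → Finset (Fin n)) (l : ℕ)
    (z : Fin n → ℝ) : Prop :=
  ∃ S : Finset (Fin g), supp z ⊆ S.biUnion G ∧ (S.biUnion G).card ≤ l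

/-- The group restricted isometry property of order `l` with constant `δ`. -/
def GRIP {m n g : ℕ} (A : Matrix (Fin m) (Fin n) ℝ) (G : Fin g → Finset (Fin n))
    (l : ℕ) (δ : ℝ) : Prop :=
  ∀ z : Fin n → ℝ, GroupSparseVec G l z →
    (1 - δ) * (l2 z) ^ 2 ≤ (l2 (A.mulVec z)) ^ 2 ∧
    (l2 (A.mulVec z)) ^ 2 ≤ (1 + δ) * (l2 z) ^ 2

/-- The ℓ2 group robust null space property of order `k`
with constants `ρ`, `τ`. -/
def GRNSP {m n g : ℕ} (A : Matrix (Fin m) (Fin n) ℝ) (G : Fin g → Finset (Fin n))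
    (k : ℕ) (ρ τ : ℝ) : Prop :=
  ∀ (h : Fin n → ℝ) (Λ : Finset (Fin n)), GroupSparseSet G k Λ →
    l2 (restrict Λ h) ≤
      ρ / Real.sqrt k * l1 (restrict Λᶜ h) + τ / Real.sqrt k * l2 (A.mulVec h)

/-- The group `k`-sparsity index of `x` with respect to the ℓ1 norm:
`σ_{k,𝒢}(x, ‖·‖₁) = min_{Λ ∈ GkS} ‖x − x_Λ‖₁ = min_{Λ ∈ GkS} ‖x_{Λᶜ}‖₁`. -/
def gIndex {n g : ℕ} (G : Fin g → Finset (Fin n)) (k : ℕ) (x : Fin n → ℝ) : ℝ :=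
  sInf {r | ∃ Λ : Finset (Fin n), GroupSparseSet G k Λ ∧ r = l1 (restrict Λᶜ x)}

/-- The (conventional) restricted isometry property of order `l`
with constant `δ`. -/
def RIP {m n : ℕ} (A : Matrix (Fin m) (Fin n) ℝ) (l : ℕ) (δ : ℝ) : Prop :=
  ∀ u : Fin n → ℝ, (supp u).card ≤ l →
    (1 - δ) * (l2 u) ^ 2 ≤ (l2 (A.mulVec u)) ^ 2 ∧
    (l2 (A.mulVec u)) ^ 2 ≤ (1 + δ) * (l2 u) ^ 2

/-- The (conventional) `k`-sparsity index
`σ_k(x, ‖·‖₁) = min_{z k-sparse} ‖x − z‖₁`. -/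
def sIndex {n : ℕ} (k : ℕ) (x : Fin n → ℝ) : ℝ :=
  sInf {r | ∃ z : Fin n → ℝ, (supp z).card ≤ k ∧ r = l1 (x - z)}

/-- The group support of `v`: the set of groups on which `v` is nonzero. -/
def Gsupp {n g : ℕ} (G : Fin g → Finset (Fin n)) (v : Fin n → ℝ) :
    Finset (Fin g) :=
  Finset.univ.filter fun j => restrict (G j) v ≠ 0


lemma l1_nonneg {d : ℕ} (x : Fin d → ℝ) : 0 ≤ l1 x :=
  Finset.sum_nonneg fun _ _ => abs_nonneg _

lemma l1_eq_zero_iff {d : ℕ} (x : Fin d → ℝ) : l1 x = 0 ↔ x = 0 := by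
  constructor
  · intro h
    funext i
    have := (Finset.sum_eq_zero_iff_of_nonneg (fun i _ => abs_nonneg (x i))).1 h i
      (Finset.mem_univ i)
    simpa using this
  · rintro rfl; simp [l1]

lemma restrict_smul {d : ℕ} (Λ : Finset (Fin d)) (c : ℝ) (x : Fin d → ℝ) :
    restrict Λ (c • x) = c • restrict Λ x := by
  funext i
  simp only [restrict, Pi.smul_apply, smul_eq_mul]
  split <;> simp

lemma restrict_sum {d : ℕ} {ι : Type*} (Λ : Finset (Fin d)) (s : Finset ι)
    (f : ι → Fin d → ℝ) :
    restrict Λ (∑ i ∈ s, f i) = ∑ i ∈ s, restrict Λ (f i) := by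
  funext j
  simp only [restrict, Finset.sum_apply]
  split <;> simp [restrict, *]

lemma restrict_restrict_self {d : ℕ} (Λ : Finset (Fin d)) (x : Fin d → ℝ) :
    restrict Λ (restrict Λ x) = restrict Λ x := by
  funext i; simp [restrict]; intro h1 h2; exact absurd h2 h1

lemma restrict_restrict_disjoint {d : ℕ} {Λ Λ' : Finset (Fin d)}
    (h : Disjoint Λ Λ') (x : Fin d → ℝ) :
    restrict Λ (restrict Λ' x) = 0 := by
  funext i
  simp only [restrict, Pi.zero_apply]
  split
  · split
    · exact absurd ‹i ∈ Λ'› (Finset.disjoint_left.mp h ‹i ∈ Λ›)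
    · rfl
  · rfl

lemma l1_restrict {d : ℕ} (Λ : Finset (Fin d)) (x : Fin d → ℝ) :
    l1 (restrict Λ x) = ∑ i ∈ Λ, |x i| := by
  rw [l1, ← Finset.sum_subset (Finset.subset_univ Λ)
    (fun i _ hi => by simp [restrict, hi])]
  exact Finset.sum_congr rfl fun i hi => by simp [restrict, hi]

lemma l1_smul {d : ℕ} (c : ℝ) (x : Fin d → ℝ) : l1 (c • x) = |c| * l1 x := by
  simp [l1, abs_mul, Finset.mul_sum]

lemma sum_restrict_groups {n g : ℕ} {G : Fin g → Finset (Fin n)}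
    (hG : IsPartition G) (x : Fin n → ℝ) :
    ∑ j, restrict (G j) x = x := by
  funext i
  obtain ⟨j₀, hj₀⟩ : ∃ j, i ∈ G j := by
    have h := hG.2.2
    have hi : i ∈ Finset.univ.biUnion G := by rw [h]; exact Finset.mem_univ i
    simpa using hi
  rw [Finset.sum_apply, Finset.sum_eq_single j₀]
  · simp [restrict, hj₀]
  · intro j _ hj
    simp only [restrict]
    rw [if_neg]
    exact fun hij => absurd hj₀ (Finset.disjoint_left.mp (hG.2.1 j j₀ hj) hij)
  · simp

lemma l1_eq_sum_groups {n g : ℕ} {G : Fin g → Finset (Fin n)}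
    (hG : IsPartition G) (x : Fin n → ℝ) :
    l1 x = ∑ j, l1 (restrict (G j) x) := by
  simp only [l1_restrict]
  rw [l1, ← hG.2.2, Finset.sum_biUnion]
  intro j _ j' _ hjj'
  exact hG.2.1 j j' hjj'

/-- **inductive step of the polytope decomposition lemma.**
If `‖v_{G_j}‖₁ ≤ α` for all `j`, `‖v‖₁ ≤ sα`, and `v` is supported on `r ≥ s + 1`
groups, then `v` is a convex combination of vectors `w_t` each supported on at most
`r − 1` groups, with `supp(w_t) ⊆ supp(v)`, `‖w_t‖₁ = ‖v‖₁`, `‖(w_t)_{G_j}‖₁ ≤ α`. -/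
theorem polytope_inductive_step {n g : ℕ}
    (G : Fin g → Finset (Fin n)) (hG : IsPartition G)
    (α : ℝ) (hα : 0 < α) (s : ℕ) (hs : 0 < s)
    (v : Fin n → ℝ)
    (hvG : ∀ j, l1 (restrict (G j) v) ≤ α)
    (hv : l1 v ≤ (s : ℝ) * α)
    (r : ℕ) (hr : r = (Gsupp G v).card) (hrs : s + 1 ≤ r) :
    ∃ (M : ℕ), 0 < M ∧
      ∃ (w : Fin M → (Fin n → ℝ)) (lam : Fin M → ℝ),
        (∀ i, 0 < lam i) ∧
        (∑ i, lam i = 1) ∧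
        (∀ i, supp (w i) ⊆ supp v) ∧
        (∀ i, l1 (w i) = l1 v) ∧
        (∀ i j, l1 (restrict (G j) (w i)) ≤ α) ∧
        (∀ i, (Gsupp G (w i)).card ≤ r - 1) ∧
        v = ∑ i, lam i • w i := by
  classical
  set R : Finset (Fin g) := Gsupp G v with hRdef
  set a : Fin g → ℝ := fun j => l1 (restrict (G j) v) with hadef
  set T : ℝ := l1 v with hTdef
  have ha_nonneg : ∀ j, 0 ≤ a j := fun j => l1_nonneg _
  have ha_le : ∀ j, a j ≤ α := by intro j; simp only [hadef]; exact hvG j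
  have ha_pos : ∀ j ∈ R, 0 < a j := by
    intro j hj
    rcases lt_or_eq_of_le (ha_nonneg j) with h | h
    · exact h
    · exfalso
      have h0 : restrict (G j) v = 0 := by
        apply (l1_eq_zero_iff _).1
        simp only [hadef] at h
        exact h.symm
      rw [hRdef] at hj
      simp [Gsupp, h0] at hj
  have ha_zero : ∀ j, j ∉ R → restrict (G j) v = 0 := by
    intro j hj
    by_contra h
    exact hj (by rw [hRdef]; simp [Gsupp, h])
  have ha_zero' : ∀ j, j ∉ R → a j = 0 := by
    intro j hj
    simp only [hadef, ha_zero j hj]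
    simp [l1]
  have hT_sum : ∑ j ∈ R, a j = T := by
    rw [hTdef, l1_eq_sum_groups hG v]
    exact Finset.sum_subset (Finset.subset_univ R)
      (fun j _ hj => by simpa only [hadef] using ha_zero' j hj)
  have hT_nonneg : 0 ≤ T := l1_nonneg v
  set C : ℝ := (r : ℝ) * α - T with hCdef
  have hαC : α ≤ C := by
    have h1 : ((s : ℝ) + 1) * α ≤ (r : ℝ) * α := by
      apply mul_le_mul_of_nonneg_right _ hα.le
      exact_mod_cast hrs
    rw [hCdef]
    nlinarith [hv]
  have hC_pos : 0 < C := lt_of_lt_of_le hα hαC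
  set B : Fin g → ℝ := fun i => C - α + a i with hBdef
  have hB_ge : ∀ i, a i ≤ B i := by
    intro i; simp only [hBdef]; linarith [hαC]
  have hB_pos : ∀ i ∈ R, 0 < B i := fun i hi => lt_of_lt_of_le (ha_pos i hi) (hB_ge i)
  have hsumR : ∑ j ∈ R, (α - a j) = C := by
    rw [Finset.sum_sub_distrib, Finset.sum_const, hT_sum, nsmul_eq_mul, hCdef, ← hr]
  set I : Finset (Fin g) := R.filter (fun i => a i < α) with hIdef
  have hIsubR : I ⊆ R := Finset.filter_subset _ _
  have hI_lt : ∀ i ∈ I, a i < α := by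
    intro i hi
    rw [hIdef] at hi
    exact (Finset.mem_filter.1 hi).2
  have hI_eq : ∀ j ∈ R, j ∉ I → a j = α := by
    intro j hjR hjI
    refine le_antisymm (ha_le j) ?_
    by_contra h
    exact hjI (by rw [hIdef]; exact Finset.mem_filter.2 ⟨hjR, lt_of_not_ge h⟩)
  have hI_ne : I.Nonempty := by
    by_contra h
    rw [Finset.not_nonempty_iff_eq_empty] at h
    have hall : ∀ j ∈ R, a j = α := by
      intro j hj
      by_contra hne
      have hlt : a j < α := lt_of_le_of_ne (ha_le j) hne
      have : j ∈ I := by rw [hIdef]; exact Finset.mem_filter.2 ⟨hj, hlt⟩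
      rw [h] at this
      exact absurd this (Finset.notMem_empty j)
    have hTr : T = (R.card : ℝ) * α := by
      rw [← hT_sum, Finset.sum_congr rfl hall, Finset.sum_const, nsmul_eq_mul]
    have h1 : ((s : ℝ) + 1) ≤ (r : ℝ) := by exact_mod_cast hrs
    rw [← hr] at hTr
    nlinarith [hv]
  set D : ℝ := ∑ i ∈ I, (α - a i) * B i / a i with hDdef
  have hD_pos : 0 < D := by
    rw [hDdef]
    apply Finset.sum_pos
    · intro i hi
      have hiR := hIsubR hi
      have h1 : 0 < α - a i := by linarith [hI_lt i hi]
      exact div_pos (mul_pos h1 (hB_pos i hiR)) (ha_pos i hiR)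
    · exact hI_ne
  set lam0 : Fin g → ℝ := fun i => (α - a i) * B i / a i / D with hlamdef
  set c : Fin g → Fin g → ℝ := fun i j => 1 + a i * (α - a j) / (B i * a j) with hcdef
  set W : Fin g → Fin n → ℝ :=
    fun i => ∑ j ∈ R.erase i, c i j • restrict (G j) v with hWdef
  have hc_nonneg : ∀ i ∈ R, ∀ k ∈ R, 0 ≤ c i k := by
    intro i hi k hk
    simp only [hcdef]
    have h1 : 0 ≤ a i * (α - a k) / (B i * a k) :=
      div_nonneg (mul_nonneg (ha_nonneg i) (by linarith [ha_le k]))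
        (mul_nonneg (hB_pos i hi).le (ha_nonneg k))
    linarith
  have restrict_W : ∀ i k, restrict (G k) (W i)
      = if k ∈ R.erase i then c i k • restrict (G k) v else 0 := by
    intro i k
    have hstep : restrict (G k) (W i)
        = ∑ j ∈ R.erase i, c i j • restrict (G k) (restrict (G j) v) := by
      rw [hWdef]
      rw [restrict_sum]
      exact Finset.sum_congr rfl fun j _ => restrict_smul _ _ _
    rw [hstep]
    split
    case isTrue hk =>
      rw [Finset.sum_eq_single_of_mem k hk]
      · rw [restrict_restrict_self]
      · intro j hj hjk
        rw [restrict_restrict_disjoint (hG.2.1 k j (Ne.symm hjk)), smul_zero]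
    case isFalse hk =>
      apply Finset.sum_eq_zero
      intro j hj
      have hjk : j ≠ k := fun h => hk (h ▸ hj)
      rw [restrict_restrict_disjoint (hG.2.1 k j (Ne.symm hjk)), smul_zero]
  have l1_restrict_W : ∀ i ∈ R, ∀ k, l1 (restrict (G k) (W i))
      = if k ∈ R.erase i then c i k * a k else 0 := by
    intro i hi k
    rw [restrict_W]
    split
    case isTrue hk =>
      rw [l1_smul, abs_of_nonneg (hc_nonneg i hi k (Finset.mem_of_mem_erase hk))]
    case isFalse hk => simp [l1]
  have hckak : ∀ i ∈ R, ∀ k ∈ R, c i k * a k = a k + a i * (α - a k) / B i := by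
    intro i hi k hk
    have hBi := (hB_pos i hi).ne'
    have hak := (ha_pos k hk).ne'
    simp only [hcdef]
    field_simp
  have hW_l1 : ∀ i ∈ R, l1 (W i) = T := by
    intro i hiR
    rw [l1_eq_sum_groups hG (W i),
      Finset.sum_congr rfl (fun k _ => l1_restrict_W i hiR k),
      Finset.sum_ite_mem, Finset.univ_inter,
      Finset.sum_congr rfl
        (fun k hk => hckak i hiR k (Finset.mem_of_mem_erase hk)),
      Finset.sum_add_distrib]
    have h2 : ∑ k ∈ R.erase i, (α - a k) = B i := by
      rw [Finset.sum_erase_eq_sub hiR, hsumR, hBdef]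
      ring
    have h3 : ∑ k ∈ R.erase i, a i * (α - a k) / B i = a i := by
      rw [← Finset.sum_div, ← Finset.mul_sum, h2, mul_div_assoc,
        div_self (hB_pos i hiR).ne', mul_one]
    have h4 : ∑ k ∈ R.erase i, a k = T - a i := by
      rw [Finset.sum_erase_eq_sub hiR, hT_sum]
    rw [h3, h4]
    ring
  have hW_group : ∀ i ∈ R, ∀ k, l1 (restrict (G k) (W i)) ≤ α := by
    intro i hiR k
    rw [l1_restrict_W i hiR k]
    split
    case isTrue hk =>
      have hkR := Finset.mem_of_mem_erase hk
      rw [hckak i hiR k hkR]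
      have h1 : a i * (α - a k) / B i ≤ α - a k := by
        rw [div_le_iff₀ (hB_pos i hiR)]
        nlinarith [ha_le k, hB_ge i, ha_nonneg i]
      linarith
    case isFalse hk => exact hα.le
  have hW_supp : ∀ i, supp (W i) ⊆ supp v := by
    intro i x hx
    simp only [supp, Finset.mem_filter, Finset.mem_univ, true_and] at hx ⊢
    intro hvx
    apply hx
    rw [hWdef]
    simp only [Finset.sum_apply, Pi.smul_apply, smul_eq_mul]
    apply Finset.sum_eq_zero
    intro j _
    simp [restrict, hvx]
  have hW_gsupp : ∀ i ∈ R, (Gsupp G (W i)).card ≤ r - 1 := by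
    intro i hiR
    have hsub : Gsupp G (W i) ⊆ R.erase i := by
      intro k hk
      simp only [Gsupp, Finset.mem_filter, Finset.mem_univ, true_and] at hk
      by_contra hk'
      apply hk
      rw [restrict_W i k, if_neg hk']
    calc (Gsupp G (W i)).card ≤ (R.erase i).card := Finset.card_le_card hsub
      _ = R.card - 1 := Finset.card_erase_of_mem hiR
      _ = r - 1 := by rw [hr]
  have hsumI : ∑ i ∈ I, (α - a i) = C := by
    rw [← hsumR]
    apply Finset.sum_subset hIsubR
    intro j hjR hjI
    rw [hI_eq j hjR hjI]
    ring
  have hlam_sum : ∑ i ∈ I, lam0 i = 1 := by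
    simp only [hlamdef]
    rw [← Finset.sum_div, ← hDdef, div_self hD_pos.ne']
  have hlam_pos : ∀ i ∈ I, 0 < lam0 i := by
    intro i hi
    have hiR := hIsubR hi
    have h1 : 0 < α - a i := by linarith [hI_lt i hi]
    simp only [hlamdef]
    exact div_pos (div_pos (mul_pos h1 (hB_pos i hiR)) (ha_pos i hiR)) hD_pos
  have hKey : ∀ j ∈ R, ∑ i ∈ I.erase j, lam0 i * c i j = 1 := by
    intro j hjR
    by_cases hjI : j ∈ I
    · have hajα : a j < α := hI_lt j hjI
      have haj := (ha_pos j hjR).ne'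
      have hlc : ∀ i ∈ I, lam0 i * c i j
          = lam0 i + (α - a i) * (α - a j) / (D * a j) := by
        intro i hi
        have hiR := hIsubR hi
        have hBi := (hB_pos i hiR).ne'
        have hai := (ha_pos i hiR).ne'
        simp only [hlamdef, hcdef]
        field_simp
      rw [Finset.sum_erase_eq_sub hjI, Finset.sum_congr rfl hlc,
        Finset.sum_add_distrib, hlam_sum, hlc j hjI]
      have h5 : ∑ i ∈ I, (α - a i) * (α - a j) / (D * a j)
          = C * (α - a j) / (D * a j) := by
        rw [← Finset.sum_div, ← Finset.sum_mul, hsumI]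
      rw [h5]
      have hBj := (hB_pos j hjR).ne'
      simp only [hlamdef, hBdef]
      field_simp
      ring
    · have hajα : a j = α := hI_eq j hjR hjI
      rw [Finset.erase_eq_of_notMem hjI, ← hlam_sum]
      apply Finset.sum_congr rfl
      intro i hi
      have hc1 : c i j = 1 := by simp [hcdef, hajα]
      rw [hc1, mul_one]
  have hvR : ∑ j ∈ R, restrict (G j) v = v := by
    conv_rhs => rw [← sum_restrict_groups hG v]
    exact Finset.sum_subset (Finset.subset_univ R) (fun j _ hj => ha_zero j hj)
  have hdecomp : v = ∑ i ∈ I, lam0 i • W i := by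
    have hWi : ∀ i ∈ I, lam0 i • W i
        = ∑ j ∈ R.erase i, (lam0 i * c i j) • restrict (G j) v := by
      intro i _
      rw [hWdef]
      simp only [Finset.smul_sum, smul_smul]
    rw [Finset.sum_congr rfl hWi]
    have h1 : ∀ i ∈ I, (∑ j ∈ R.erase i, (lam0 i * c i j) • restrict (G j) v)
        = (∑ j ∈ R, (lam0 i * c i j) • restrict (G j) v)
          - (lam0 i * c i i) • restrict (G i) v :=
      fun i hi => Finset.sum_erase_eq_sub (hIsubR hi)
    rw [Finset.sum_congr rfl h1, Finset.sum_sub_distrib, Finset.sum_comm]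
    have h2 : ∑ j ∈ R, (if j ∈ I then (lam0 j * c j j) • restrict (G j) v else 0)
        = ∑ i ∈ I, (lam0 i * c i i) • restrict (G i) v := by
      rw [Finset.sum_ite_mem, Finset.inter_eq_right.mpr hIsubR]
    rw [← h2, ← Finset.sum_sub_distrib]
    have h3 : ∀ j ∈ R, ((∑ i ∈ I, (lam0 i * c i j) • restrict (G j) v)
        - (if j ∈ I then (lam0 j * c j j) • restrict (G j) v else 0))
        = restrict (G j) v := by
      intro j hj
      have hstep : ((∑ i ∈ I, (lam0 i * c i j) • restrict (G j) v)
          - (if j ∈ I then (lam0 j * c j j) • restrict (G j) v else 0))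
          = ∑ i ∈ I.erase j, (lam0 i * c i j) • restrict (G j) v := by
        by_cases hjI : j ∈ I
        · rw [if_pos hjI, Finset.sum_erase_eq_sub hjI]
        · rw [if_neg hjI, Finset.erase_eq_of_notMem hjI, sub_zero]
      rw [hstep, ← Finset.sum_smul, hKey j hj, one_smul]
    rw [Finset.sum_congr rfl h3, hvR]
  refine ⟨I.card, Finset.card_pos.2 hI_ne, ?_⟩
  have e := I.equivFin
  refine ⟨fun t => W (e.symm t : Fin g), fun t => lam0 (e.symm t : Fin g),
    ?_, ?_, ?_, ?_, ?_, ?_, ?_⟩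
  · intro t
    exact hlam_pos _ (e.symm t).2
  · rw [Equiv.sum_comp e.symm (fun x : I => lam0 (x : Fin g)),
      Finset.sum_coe_sort I (fun x => lam0 x)]
    exact hlam_sum
  · intro t
    exact hW_supp _
  · intro t
    exact hW_l1 _ (hIsubR (e.symm t).2)
  · intro t j
    exact hW_group _ (hIsubR (e.symm t).2) j
  · intro t
    exact hW_gsupp _ (hIsubR (e.symm t).2)
  · rw [Equiv.sum_comp e.symm (fun x : I => lam0 (x : Fin g) • W (x : Fin g)),
      Finset.sum_coe_sort I (fun x => lam0 x • W x)]
    exact hdecomp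


end CS
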